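/- For all real u ≥ 1, the function f(u) = log₂((2+u)/(1+u)) + log₂((4+3u)/(3+3u)) − log₂((4+u)/(3+u)) satisfies f(u) < 1/(1+u). -/

import Mathlib

noncomputable def ehllF (u : ℝ) : ℝ :=
  Real.logb 2 ((2 + u) / (1 + u)) + Real.logb 2 ((4 + 3 * u) / (3 + 3 * u))
    - Real.logb 2 ((4 + u) / (3 + u))

theorem ehllF_lt_inv_one_add (u : ℝ) (hu : 1 ≤ u) : ehllF u < 1 / (1 + u) := by
  have h1 : (0:ℝ) < 1 + u := by linarith
  have h2 : (0:ℝ) < 2 + u := by linarith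
  have h3 : (0:ℝ) < 3 + u := by linarith
  have h4 : (0:ℝ) < 4 + u := by linarith
  have h5 : (0:ℝ) < 3 + 3 * u := by linarith
  have h6 : (0:ℝ) < 4 + 3 * u := by linarith
  set A : ℝ := (2 + u) * (4 + 3 * u) * (3 + u) with hA
  set B : ℝ := (1 + u) * (3 + 3 * u) * (4 + u) with hB
  have hApos : 0 < A := by positivity
  have hBpos : 0 < B := by positivity
  have hx1 : 1 < A / B := by
    rw [lt_div_iff₀ hBpos]
    nlinarith [sq_nonneg u]
  have hxpos : 0 < A / B := by positivity
  have hratio : (2 + u) / (1 + u) * ((4 + 3 * u) / (3 + 3 * u)) / ((4 + u) / (3 + u))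
      = A / B := by
    rw [hA, hB, div_eq_div_iff (by positivity) hBpos.ne']
    field_simp
    ring
  have hF : ehllF u = Real.logb 2 (A / B) := by
    unfold ehllF
    rw [← Real.logb_mul (by positivity) (by positivity),
      ← Real.logb_div (by positivity) (by positivity), hratio]
  -- log (A/B) < (A/B - (A/B)⁻¹)/2
  have hlog : Real.log (A / B) < (A / B - (A / B)⁻¹) / 2 := by
    rw [← Real.sinh_log hxpos]
    exact Real.self_lt_sinh_iff.2 (Real.log_pos hx1)
  -- polynomial bound
  have hlog2 : (0.6931471803 : ℝ) < Real.log 2 := Real.log_two_gt_d9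
  have hlog2pos : (0:ℝ) < Real.log 2 := by linarith
  have ht : (0:ℝ) ≤ u - 1 := by linarith
  have p2 : (0:ℝ) ≤ (u - 1) ^ 2 := pow_nonneg ht 2
  have p3 : (0:ℝ) ≤ (u - 1) ^ 3 := pow_nonneg ht 3
  have p4 : (0:ℝ) ≤ (u - 1) ^ 4 := pow_nonneg ht 4
  have p5 : (0:ℝ) ≤ (u - 1) ^ 5 := pow_nonneg ht 5
  have p6 : (0:ℝ) ≤ (u - 1) ^ 6 := pow_nonneg ht 6
  have hpoly : (A ^ 2 - B ^ 2) * (1 + u) ≤ 2 * 0.6931471803 * (A * B) := by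
    rw [hA, hB]
    nlinarith [ht, p2, p3, p4, p5, p6]
  have hkey : (A / B - (A / B)⁻¹) / 2 ≤ 0.6931471803 / (1 + u) := by
    have heq : A / B - (A / B)⁻¹ = (A ^ 2 - B ^ 2) / (A * B) := by
      field_simp
    rw [heq, div_div, div_le_div_iff₀ (by positivity) h1]
    linarith [hpoly]
  have hkey2 : (A / B - (A / B)⁻¹) / 2 < Real.log 2 / (1 + u) := by
    have : (0.6931471803 : ℝ) / (1 + u) < Real.log 2 / (1 + u) := by gcongr
    linarith
  rw [hF, Real.logb, div_lt_iff₀ hlog2pos]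
  calc Real.log (A / B) < (A / B - (A / B)⁻¹) / 2 := hlog
    _ < Real.log 2 / (1 + u) := hkey2
    _ = 1 / (1 + u) * Real.log 2 := by ring
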